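/- Fix s ≥ 0, define p_s(n) as the position of the n-th 1 in the infinite word D_s = 1 0^(s_1 - 1) 1 0^(s_2 - 1) 1 0^(s_3 - 1) ⋯, where s_j = r(j) + s·[j is a power of 2] and r(j) = ν₂(j)+1. Then the formal power series ∑_{n ≥ 0} p_s(n) z^n (with p_s(0)=1) equals (1/(1-z)) · ( 1 + z ∑_{k ≥ 0} z^(2^k) ( s + 1/(1 - z^(2^k)) ) ). -/

import Mathlib

open PowerSeries
open scoped Classical

lemma inv_one_sub_X_pow (d : ℕ) (hd : 0 < d) :
    ((1 - X ^ d : PowerSeries ℚ))⁻¹ = mk fun n => if d ∣ n then 1 else 0 := by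
  have hc : constantCoeff (1 - X ^ d : PowerSeries ℚ) ≠ 0 := by
    simp [map_sub, map_pow, constantCoeff_X, zero_pow hd.ne']
  rw [PowerSeries.inv_eq_iff_mul_eq_one hc]
  ext n
  rw [mul_sub, mul_one, map_sub, coeff_mul_X_pow']
  simp only [coeff_mk, coeff_one]
  rcases Nat.eq_zero_or_pos n with rfl | hn
  · simp [hd.ne', Nat.not_le.mpr hd]
  · rw [if_neg hn.ne']
    have key : d ≤ n → (d ∣ n ↔ d ∣ n - d) := fun h2 =>
      ⟨fun h => Nat.dvd_sub h dvd_rfl,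
       fun h => (Nat.sub_add_cancel h2) ▸ dvd_add h dvd_rfl⟩
    split_ifs with h1 h2 h3 h4 h5 <;> try norm_num
    · exact absurd ((key h2).mp h1) h3
    · exact absurd (Nat.le_of_dvd hn h1) h2
    · exact absurd ((key h4).mpr h5) h1

-- counting lemma
lemma count_lemma (s N n : ℕ) (hn : 1 ≤ n) (hnN : n ≤ N) :
    ∑ k ∈ Finset.range (N + 1),
      (if 2 ^ k ≤ n then
        ((if n - 2 ^ k = 0 then (s : ℚ) else 0) +
         (if 2 ^ k ∣ n - 2 ^ k then 1 else 0)) else 0)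
    = padicValNat 2 n + 1 + s * (if ∃ m : ℕ, n = 2 ^ m then 1 else 0) := by
  have hsplit : ∀ k : ℕ, (if 2 ^ k ≤ n then
        ((if n - 2 ^ k = 0 then (s : ℚ) else 0) +
         (if 2 ^ k ∣ n - 2 ^ k then 1 else 0)) else 0)
      = (if 2 ^ k ≤ n ∧ n - 2 ^ k = 0 then (s : ℚ) else 0)
        + (if 2 ^ k ≤ n ∧ 2 ^ k ∣ n - 2 ^ k then 1 else 0) := by
    intro k; split_ifs <;> simp_all
  rw [Finset.sum_congr rfl fun k _ => hsplit k, Finset.sum_add_distrib]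
  have v := padicValNat 2 n
  have hvN : padicValNat 2 n ≤ N :=
    le_trans (le_trans (padicValNat_le_nat_log n) (Nat.log_le_self 2 n)) hnN
  have h2 : ∀ k : ℕ, (2 ^ k ≤ n ∧ 2 ^ k ∣ n - 2 ^ k) ↔ k ≤ padicValNat 2 n := by
    intro k
    constructor
    · rintro ⟨hle, hdvd⟩
      have : (2:ℕ) ^ k ∣ n := (Nat.sub_add_cancel hle) ▸ dvd_add hdvd dvd_rfl
      exact (padicValNat_dvd_iff_le (Nat.one_le_iff_ne_zero.mp hn)).mp this
    · intro hk
      have hdvd : (2:ℕ) ^ k ∣ n :=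
        dvd_trans (pow_dvd_pow 2 hk) pow_padicValNat_dvd
      exact ⟨Nat.le_of_dvd hn hdvd, Nat.dvd_sub hdvd dvd_rfl⟩
  have hsum2 : ∑ k ∈ Finset.range (N + 1),
      (if 2 ^ k ≤ n ∧ 2 ^ k ∣ n - 2 ^ k then (1:ℚ) else 0)
      = padicValNat 2 n + 1 := by
    rw [Finset.sum_congr rfl fun k _ => by rw [if_congr (h2 k) rfl rfl]]
    rw [← Finset.sum_filter]
    have : (Finset.range (N + 1)).filter (fun k => k ≤ padicValNat 2 n)
        = Finset.range (padicValNat 2 n + 1) := by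
      ext k; simp [Nat.lt_succ_iff]; omega
    simp [this]
  have hsum1 : ∑ k ∈ Finset.range (N + 1),
      (if 2 ^ k ≤ n ∧ n - 2 ^ k = 0 then (s:ℚ) else 0)
      = s * (if ∃ m : ℕ, n = 2 ^ m then 1 else 0) := by
    by_cases hex : ∃ m : ℕ, n = 2 ^ m
    · obtain ⟨m, rfl⟩ := hex
      have hmN : m < N + 1 := lt_of_lt_of_le (Nat.lt_two_pow_self (n := m)) (by omega)
      have hcond : ∀ k : ℕ, (2 ^ k ≤ 2 ^ m ∧ 2 ^ m - 2 ^ k = 0) ↔ k = m := by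
        intro k
        constructor
        · rintro ⟨h1, h2⟩
          have h3 : (2:ℕ) ^ m ≤ 2 ^ k := by omega
          have hk : k ≤ m := (Nat.pow_le_pow_iff_right one_lt_two).mp h1
          have hm : m ≤ k := (Nat.pow_le_pow_iff_right one_lt_two).mp h3
          omega
        · rintro rfl; simp
      rw [Finset.sum_congr rfl fun k _ => by rw [if_congr (hcond k) rfl rfl]]
      rw [Finset.sum_ite_eq' (Finset.range (N+1)) m fun _ => (s:ℚ)]
      simp [Finset.mem_range.mpr hmN]
    · rw [if_neg hex]
      rw [Finset.sum_eq_zero]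
      · ring
      intro k _
      rw [if_neg]
      rintro ⟨h1, h2⟩
      exact hex ⟨k, by omega⟩
  rw [hsum1, hsum2]; ring


lemma ones_mul_coeff (φ : PowerSeries ℚ) (n : ℕ) :
    coeff n ((mk fun _ => (1:ℚ)) * φ) = ∑ j ∈ Finset.range (n + 1), coeff j φ := by
  rw [coeff_mul, Finset.Nat.sum_antidiagonal_eq_sum_range_succ_mk]
  simp only [coeff_mk, one_mul]
  have h := Finset.sum_range_reflect (fun j => coeff j φ) (n + 1)
  simpa using h

/-- Generating function of p_s(n), the position of the n-th 1 in the infinite word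
    D_s = 1 0^(s_1-1) 1 0^(s_2-1) ⋯, where s_j = r(j) + s·[j is a power of 2] and
    r(j) = ν₂(j) + 1 is the ruler function; equivalently p_s(0) = p_s(1) = 1 and
    p_s(n+1) = p_s(n) + s_n for n ≥ 1.  Then
    ∑_{n ≥ 0} p_s(n) z^n = (1/(1-z)) · (1 + z ∑_{k ≥ 0} z^(2^k)(s + 1/(1-z^(2^k)))).
    The infinite sum is a legitimate formal sum (the k-th term has order 2^k); the
    identity is expressed coefficientwise, the degree-N coefficient involving only
    the terms with k ≤ N. -/
theorem pos_generating_function (s : ℕ) (p : ℕ → ℕ)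
    (hp0 : p 0 = 1) (hp1 : p 1 = 1)
    (hrec : ∀ n, 1 ≤ n → p (n + 1)
      = p n + (padicValNat 2 n + 1 + s * (if ∃ m : ℕ, n = 2 ^ m then 1 else 0))) :
    ∀ N : ℕ,
      PowerSeries.coeff (R := ℚ) N (PowerSeries.mk fun n => (p n : ℚ))
        = PowerSeries.coeff (R := ℚ) N
            ((1 - (X : PowerSeries ℚ))⁻¹ *
              (1 + X * ∑ k ∈ Finset.range (N + 1),
                X ^ (2 ^ k) * (C (R := ℚ) (s : ℚ) + (1 - X ^ (2 ^ k))⁻¹))) := by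
  classical
  have hp : ∀ M : ℕ, (p M : ℚ) = 1 + ∑ n ∈ Finset.range M,
      (if n = 0 then (0:ℚ) else
        (padicValNat 2 n + 1 + s * (if ∃ m : ℕ, n = 2 ^ m then 1 else 0) : ℚ)) := by
    intro M
    induction M with
    | zero => simp [hp0]
    | succ M ih =>
      rcases Nat.eq_zero_or_pos M with rfl | hM
      · simp [hp1]
      · rw [hrec M hM, Finset.sum_range_succ, if_neg hM.ne']
        push_cast
        rw [ih]
        ring
  intro N
  set S : PowerSeries ℚ := ∑ k ∈ Finset.range (N + 1),
      X ^ (2 ^ k) * (C (s:ℚ) + (1 - X ^ (2 ^ k))⁻¹) with hSdef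
  have hinv1 : ((1 - X : PowerSeries ℚ))⁻¹ = mk fun _ => (1:ℚ) := by
    have h := inv_one_sub_X_pow 1 one_pos
    simpa using h
  rw [coeff_mk, hinv1, ones_mul_coeff, Finset.sum_range_succ']
  have hcoeffS : ∀ i : ℕ, coeff i S = ∑ k ∈ Finset.range (N+1),
      (if 2^k ≤ i then ((if i - 2^k = 0 then (s:ℚ) else 0)
        + (if 2^k ∣ i - 2^k then (1:ℚ) else 0)) else 0) := by
    intro i
    rw [hSdef, map_sum]
    refine Finset.sum_congr rfl fun k _ => ?_
    rw [inv_one_sub_X_pow _ (pow_pos two_pos k)]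
    simp only [coeff_X_pow_mul', map_add, coeff_C, coeff_mk]
  have step : ∀ j : ℕ, coeff (j+1) ((1 : PowerSeries ℚ) + X * S) = coeff j S := by
    intro j
    rw [map_add, coeff_one, if_neg (Nat.succ_ne_zero j), coeff_succ_X_mul, zero_add]
  have h0 : coeff 0 ((1:PowerSeries ℚ) + X * S) = 1 := by
    rw [map_add, coeff_one, if_pos rfl]
    simp [coeff_zero_eq_constantCoeff, map_mul]
  have hterm : ∀ i ∈ Finset.range N, coeff i S
      = (if i = 0 then (0:ℚ) else
        (padicValNat 2 i + 1 + s * (if ∃ m : ℕ, i = 2 ^ m then 1 else 0) : ℚ)) := by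
    intro i hi
    rcases Nat.eq_zero_or_pos i with rfl | hi1
    · rw [if_pos rfl, hcoeffS, Finset.sum_eq_zero]
      intro k _
      rw [if_neg (Nat.not_le.mpr (pow_pos two_pos k))]
    · rw [if_neg hi1.ne', hcoeffS]
      exact count_lemma s N i hi1 (le_of_lt (Finset.mem_range.mp hi))
  rw [hp N, h0, Finset.sum_congr rfl fun i hi => (step i).trans (hterm i hi)]
  ring
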